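/- Let n, q, c be integers with n ≥ 1, q ≥ 1 and 1 ≤ c ≤ q, and let ε, α be real numbers with 0 < ε < α ≤ 1/3. Let b = ⌊(α − ε)·n⌋ and assume b ≥ 1, and let s = ⌈((2α − ε)/ε²)·((n·ln 2)/c + ln q)⌉ and assume s ≤ n. Let T = ∑_{j=⌈α·s⌉}^{s} C(b,j)·C(n−b, s−j). Then T^c · 2^n · q^c ≤ C(n,s)^c. -/

import Mathlib

open Finset

lemma htb_idA (m k : ℕ) : (k+1) * m.choose (k+1) = m * (m-1).choose k := by
  cases m with
  | zero => simp
  | succ m' =>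
    have h := Nat.add_one_mul_choose_eq m' k
    simpa [Nat.mul_comm] using h.symm

lemma htb_idB (m k : ℕ) : (m - k) * m.choose k = m * (m-1).choose k := by
  rcases lt_or_ge k m with hk | hk
  · have h1 : m - k = (m - k - 1) + 1 := by omega
    have hA := htb_idA m (m - k - 1)
    rw [← h1] at hA
    have hsymm1 : m.choose (m - k) = m.choose k := Nat.choose_symm hk.le
    have hsymm2 : (m-1).choose (m - k - 1) = (m-1).choose k := by
      have : m - k - 1 = (m-1) - k := by omega
      rw [this, Nat.choose_symm (by omega)]
    rw [hsymm1, hsymm2] at hA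
    exact hA
  · rcases eq_or_lt_of_le hk with heq | hlt
    · subst heq
      have : m.choose m = 1 := Nat.choose_self m
      rcases Nat.eq_zero_or_pos m with h0 | h0
      · simp [h0]
      · have : (m-1).choose m = 0 := Nat.choose_eq_zero_of_lt (by omega)
        simp [this, Nat.sub_self]
    · have h1 : m.choose k = 0 := Nat.choose_eq_zero_of_lt hlt
      have h2 : (m-1).choose k = 0 := Nat.choose_eq_zero_of_lt (by omega)
      simp [h1, h2]

-- Vandermonde, range form
lemma htb_vdm (m n k : ℕ) :
    ∑ j ∈ range (k+1), m.choose j * n.choose (k - j) = (m+n).choose k := by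
  rw [Nat.add_choose_eq, Finset.Nat.sum_antidiagonal_eq_sum_range_succ_mk]

-- cast identity: (k+1) * C(m,k+1) = (m - k) * C(m,k) over ℝ
lemma htb_cast (m k : ℕ) :
    ((k:ℝ)+1) * (m.choose (k+1) : ℝ) = ((m:ℝ) - k) * (m.choose k : ℝ) := by
  have hnat : (k+1) * m.choose (k+1) = (m-k) * m.choose k :=
    (htb_idA m k).trans (htb_idB m k).symm
  rcases le_or_gt k m with hk | hk
  · have := congrArg (Nat.cast : ℕ → ℝ) hnat
    push_cast [Nat.cast_sub hk] at this
    convert this using 2 <;> push_cast <;> ring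
  · have h1 : m.choose k = 0 := Nat.choose_eq_zero_of_lt hk
    have h2 : m.choose (k+1) = 0 := Nat.choose_eq_zero_of_lt (by omega)
    simp [h1, h2]

lemma htb_cheb (S : Finset ℕ) (w f g : ℕ → ℝ) (hw : ∀ i ∈ S, 0 ≤ w i)
    (hfg : ∀ i ∈ S, ∀ j ∈ S, 0 ≤ (f i - f j) * (g i - g j)) :
    (∑ i ∈ S, w i * f i) * (∑ i ∈ S, w i * g i) ≤
      (∑ i ∈ S, w i) * (∑ i ∈ S, w i * (f i * g i)) := by
  have key : 0 ≤ ∑ i ∈ S, ∑ j ∈ S, w i * w j * ((f i - f j) * (g i - g j)) :=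
    Finset.sum_nonneg fun i hi => Finset.sum_nonneg fun j hj =>
      mul_nonneg (mul_nonneg (hw i hi) (hw j hj)) (hfg i hi j hj)
  have expand : ∑ i ∈ S, ∑ j ∈ S, w i * w j * ((f i - f j) * (g i - g j)) =
      2 * ((∑ i ∈ S, w i) * (∑ i ∈ S, w i * (f i * g i))) -
      2 * ((∑ i ∈ S, w i * f i) * (∑ i ∈ S, w i * g i)) := by
    have h1 : ∀ i ∈ S, ∀ j ∈ S, w i * w j * ((f i - f j) * (g i - g j)) =
        (w i * (w j * (f j * g j)) + w j * (w i * (f i * g i)))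
        - ((w i * f i) * (w j * g j) + (w j * f j) * (w i * g i)) := by
      intros; ring
    rw [Finset.sum_congr rfl fun i hi => Finset.sum_congr rfl fun j hj => h1 i hi j hj]
    simp only [Finset.sum_sub_distrib, Finset.sum_add_distrib]
    rw [Finset.sum_comm (f := fun i j => w j * (w i * (f i * g i))),
        Finset.sum_comm (f := fun i j => (w j * f j) * (w i * g i))]
    simp only [← Finset.mul_sum, ← Finset.sum_mul]
    ring
  linarith [expand ▸ key]

-- mean identity: n * Σ j·w_j = b * s * C(n,s)
lemma htb_mean (n b s : ℕ) (hb1 : 1 ≤ b) (hbn : b ≤ n) :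
    (n:ℝ) * ∑ j ∈ range (s+1),
        ((b.choose j : ℝ) * ((n-b).choose (s-j) : ℝ)) * (j:ℝ)
      = (b:ℝ) * s * (n.choose s : ℝ) := by
  cases s with
  | zero => simp
  | succ t =>
    have hnat : ∑ j ∈ range (t+2), (b.choose j * (n-b).choose (t+1-j)) * j
        = b * (n-1).choose t := by
      rw [Finset.sum_range_succ'] -- f (i+1) terms + f 0
      simp only [Nat.mul_zero, Nat.choose_zero_right, Nat.add_zero]
      have : ∀ k ∈ range (t+1), (b.choose (k+1) * (n-b).choose (t+1-(k+1))) * (k+1)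
          = b * ((b-1).choose k * (n-b).choose (t-k)) := by
        intro k hk
        have h1 : t+1-(k+1) = t - k := by omega
        rw [h1]
        have := htb_idA b k
        calc (b.choose (k+1) * (n-b).choose (t-k)) * (k+1)
            = ((k+1) * b.choose (k+1)) * (n-b).choose (t-k) := by ring
          _ = (b * (b-1).choose k) * (n-b).choose (t-k) := by rw [this]
          _ = b * ((b-1).choose k * (n-b).choose (t-k)) := by ring
      rw [Finset.sum_congr rfl this, ← Finset.mul_sum, htb_vdm (b-1) (n-b) t]
      have : b - 1 + (n - b) = n - 1 := by omega
      rw [this]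
    -- now cast and use idA for n
    have hcast := congrArg (Nat.cast : ℕ → ℝ) hnat
    push_cast at hcast
    have hA := htb_idA n t
    have hAc := congrArg (Nat.cast : ℕ → ℝ) hA
    push_cast at hAc
    -- goal : n * Σ ... = b * (t+1) * C(n,t+1)
    calc (n:ℝ) * ∑ j ∈ range (t+1+1),
          ((b.choose j : ℝ) * ((n-b).choose (t+1-j) : ℝ)) * (j:ℝ)
        = (n:ℝ) * ((b:ℝ) * ((n-1).choose t : ℝ)) := by rw [← hcast]
      _ = (b:ℝ) * ((n:ℝ) * ((n-1).choose t : ℝ)) := by ring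
      _ = (b:ℝ) * (((t:ℝ)+1) * (n.choose (t+1) : ℝ)) := by rw [← hAc]
      _ = (b:ℝ) * (t+1 : ℕ) * (n.choose (t+1) : ℝ) := by push_cast; ring

lemma htb_mgf (n b : ℕ) (hn : 1 ≤ n) (hb1 : 1 ≤ b) (hbn : b ≤ n) (l : ℝ) (hl : 1 ≤ l) :
    ∀ s : ℕ, s ≤ n →
      (∑ j ∈ range (s+1), l^j * ((b.choose j : ℝ) * ((n-b).choose (s-j) : ℝ)))
        ≤ (n.choose s : ℝ) * (1 + (l-1) * b / n)^s := by
  intro s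
  induction s with
  | zero => intro _; simp
  | succ t IH =>
    intro hsn
    have htn : t ≤ n := by omega
    have IH' := IH htn
    set w : ℕ → ℝ := fun j => (b.choose j : ℝ) * ((n-b).choose (t-j) : ℝ) with hw
    set F : ℝ := ∑ j ∈ range (t+1), l^j * w j with hF
    set H : ℝ := ∑ j ∈ range (t+1), (j:ℝ) * (l^j * w j) with hH
    have hnR : (0:ℝ) < n := by exact_mod_cast hn
    have hwnn : ∀ j, 0 ≤ w j := fun j => mul_nonneg (Nat.cast_nonneg _) (Nat.cast_nonneg _)
    have hFnn : 0 ≤ F := Finset.sum_nonneg fun j _ =>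
      mul_nonneg (pow_nonneg (by linarith) _) (hwnn j)
    -- recurrence: (t+1) * F(t+1) = l*(b*F - H) + ((n-b:ℝ) - t)*F + H
    have hrec : ((t:ℝ)+1) *
        (∑ j ∈ range (t+2), l^j * ((b.choose j : ℝ) * ((n-b).choose (t+1-j) : ℝ)))
        = l * ((b:ℝ)*F - H) + (((n:ℝ)-(b:ℝ)) - t)*F + H := by
      rw [Finset.mul_sum]
      have split : ∀ j ∈ range (t+2),
          ((t:ℝ)+1) * (l^j * ((b.choose j : ℝ) * ((n-b).choose (t+1-j) : ℝ)))
          = (j:ℝ) * (l^j * ((b.choose j : ℝ) * ((n-b).choose (t+1-j) : ℝ)))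
            + ((t+1-j : ℕ):ℝ) * (l^j * ((b.choose j : ℝ) * ((n-b).choose (t+1-j) : ℝ))) := by
        intro j hj
        simp only [mem_range] at hj
        have : ((t+1-j : ℕ):ℝ) = (t:ℝ) + 1 - j := by
          have : (j:ℝ) ≤ (t:ℝ)+1 := by exact_mod_cast Nat.lt_succ_iff.mp (by omega)
          push_cast [Nat.cast_sub (by omega : j ≤ t+1)]; ring
        rw [this]; ring
      rw [Finset.sum_congr rfl split, Finset.sum_add_distrib]
      -- S1
      have hS1 : ∑ j ∈ range (t+2), (j:ℝ) * (l^j * ((b.choose j : ℝ) * ((n-b).choose (t+1-j) : ℝ)))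
          = l * ((b:ℝ)*F - H) := by
        rw [Finset.sum_range_succ']
        simp only [Nat.cast_zero, zero_mul, add_zero]
        have congr1 : ∀ k ∈ range (t+1),
            ((k+1 : ℕ):ℝ) * (l^(k+1) * ((b.choose (k+1) : ℝ) * ((n-b).choose (t+1-(k+1)) : ℝ)))
            = l * (l^k * (((b:ℝ) - k) * (b.choose k : ℝ) * ((n-b).choose (t-k) : ℝ))) := by
          intro k hk
          have h1 : t+1-(k+1) = t - k := by omega
          rw [h1]
          have hc := htb_cast b k
          push_cast
          calc ((k:ℝ)+1) * (l^(k+1) * ((b.choose (k+1) : ℝ) * ((n-b).choose (t-k) : ℝ)))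
              = (((k:ℝ)+1) * (b.choose (k+1):ℝ)) * (l^(k+1) * ((n-b).choose (t-k) : ℝ)) := by ring
            _ = (((b:ℝ) - k) * (b.choose k:ℝ)) * (l^(k+1) * ((n-b).choose (t-k) : ℝ)) := by rw [hc]
            _ = l * (l^k * (((b:ℝ) - k) * (b.choose k : ℝ) * ((n-b).choose (t-k) : ℝ))) := by ring
        rw [Finset.sum_congr rfl congr1, ← Finset.mul_sum]
        congr 1
        have : ∀ k ∈ range (t+1), l^k * (((b:ℝ) - k) * (b.choose k : ℝ) * ((n-b).choose (t-k) : ℝ))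
            = (b:ℝ) * (l^k * w k) - (k:ℝ) * (l^k * w k) := by
          intro k hk; simp only [hw]; ring
        rw [Finset.sum_congr rfl this, Finset.sum_sub_distrib, ← Finset.mul_sum, hF, hH]
      -- S2
      have hS2 : ∑ j ∈ range (t+2), ((t+1-j : ℕ):ℝ) * (l^j * ((b.choose j : ℝ) * ((n-b).choose (t+1-j) : ℝ)))
          = (((n:ℝ)-(b:ℝ)) - t)*F + H := by
        rw [Finset.sum_range_succ]
        simp only [Nat.sub_self, Nat.cast_zero, zero_mul, add_zero]
        have congr2 : ∀ j ∈ range (t+1),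
            ((t+1-j : ℕ):ℝ) * (l^j * ((b.choose j : ℝ) * ((n-b).choose (t+1-j) : ℝ)))
            = l^j * ((b.choose j : ℝ) * ((((n:ℝ)-(b:ℝ)) - ((t:ℝ)-(j:ℝ))) * ((n-b).choose (t-j) : ℝ))) := by
          intro j hj
          simp only [mem_range] at hj
          have hjt : j ≤ t := by omega
          have h1 : t+1-j = (t-j)+1 := by omega
          rw [h1]
          have hc := htb_cast (n-b) (t-j)
          have hcast1 : (((t-j)+1 : ℕ):ℝ) = ((t-j:ℕ):ℝ) + 1 := by push_cast; ring
          have hcast2 : ((t-j:ℕ):ℝ) = (t:ℝ) - j := by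
            push_cast [Nat.cast_sub hjt]; ring
          have hcast3 : ((n-b:ℕ):ℝ) = (n:ℝ) - b := by
            push_cast [Nat.cast_sub hbn]; ring
          rw [hcast2, hcast3] at hc
          rw [hcast1, hcast2]
          linear_combination (l^j * (b.choose j : ℝ)) * hc
        rw [Finset.sum_congr rfl congr2]
        have : ∀ j ∈ range (t+1),
            l^j * ((b.choose j : ℝ) * ((((n:ℝ)-(b:ℝ)) - ((t:ℝ)-(j:ℝ))) * ((n-b).choose (t-j) : ℝ)))
            = (((n:ℝ)-(b:ℝ)) - t) * (l^j * w j) + (j:ℝ) * (l^j * w j) := by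
          intro j hj; simp only [hw]; ring
        rw [Finset.sum_congr rfl this, Finset.sum_add_distrib, ← Finset.mul_sum, hF, hH]
      rw [hS1, hS2]; ring
    -- Chebyshev: b*t*F ≤ n*H
    have hsumw : ∑ j ∈ range (t+1), w j = (n.choose t : ℝ) := by
      have hv := htb_vdm b (n-b) t
      have hbnb : b + (n-b) = n := by omega
      rw [hbnb] at hv
      rw [← hv]
      push_cast
      rfl
    have hcheb := htb_cheb (range (t+1)) w (fun j => (j:ℝ)) (fun j => l^j)
      (fun i _ => hwnn i)
      (fun i _ j _ => by
        rcases le_or_gt i j with h | h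
        · have h1 : (i:ℝ) - j ≤ 0 := by
            have : (i:ℝ) ≤ j := by exact_mod_cast h
            linarith
          have h2 : l^i - l^j ≤ 0 := by
            have := pow_le_pow_right₀ (by linarith : (1:ℝ) ≤ l) h
            linarith
          have := mul_nonneg (neg_nonneg.2 h1) (neg_nonneg.2 h2)
          rw [neg_mul_neg] at this
          exact this
        · have h1 : (0:ℝ) ≤ (i:ℝ) - j := by
            have : (j:ℝ) ≤ i := by exact_mod_cast h.le
            linarith
          have h2 : (0:ℝ) ≤ l^i - l^j := by
            have := pow_le_pow_right₀ (by linarith : (1:ℝ) ≤ l) h.le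
            linarith
          exact mul_nonneg h1 h2)
    have hmean := htb_mean n b t hb1 hbn
    have hC : (0:ℝ) < (n.choose t : ℝ) := by
      exact_mod_cast Nat.choose_pos htn
    have hFeq : ∑ j ∈ range (t+1), w j * l^j = F := by
      rw [hF]; exact Finset.sum_congr rfl fun j _ => by ring
    have hHeq : ∑ j ∈ range (t+1), w j * ((j:ℝ) * l^j) = H := by
      rw [hH]; exact Finset.sum_congr rfl fun j _ => by ring
    have hJeq : ∑ j ∈ range (t+1), w j * (j:ℝ)
        = ∑ j ∈ range (t+1), ((b.choose j : ℝ) * ((n-b).choose (t-j) : ℝ)) * (j:ℝ) := rfl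
    rw [hFeq, hHeq, hsumw] at hcheb
    have hbtF : (b:ℝ) * t * F ≤ (n:ℝ) * H := by
      have h1 : ((b:ℝ) * t * (n.choose t : ℝ)) * F ≤ ((n:ℝ) * H) * (n.choose t : ℝ) := by
        calc ((b:ℝ) * t * (n.choose t : ℝ)) * F
            = (n:ℝ) * ((∑ j ∈ range (t+1), w j * (j:ℝ)) * F) := by
              rw [hJeq, ← mul_assoc, hmean]
          _ ≤ (n:ℝ) * ((n.choose t : ℝ) * H) := by
              apply mul_le_mul_of_nonneg_left _ (le_of_lt hnR)
              exact hcheb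
          _ = ((n:ℝ) * H) * (n.choose t : ℝ) := by ring
      have h2 : ((b:ℝ) * t * F) * (n.choose t : ℝ) ≤ ((n:ℝ) * H) * (n.choose t : ℝ) := by
        calc ((b:ℝ) * t * F) * (n.choose t : ℝ) = ((b:ℝ) * t * (n.choose t : ℝ)) * F := by ring
          _ ≤ ((n:ℝ) * H) * (n.choose t : ℝ) := h1
      exact le_of_mul_le_mul_right h2 hC
    -- combine
    set x : ℝ := 1 + (l-1) * b / n with hx
    have hx1 : (1:ℝ) ≤ x := by
      rw [hx]
      have : 0 ≤ (l-1) * b / n := div_nonneg (mul_nonneg (by linarith) (Nat.cast_nonneg b)) (le_of_lt hnR)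
      linarith
    have hnt : (1:ℝ) ≤ (n:ℝ) - t := by
      have : (t:ℝ) + 1 ≤ (n:ℝ) := by exact_mod_cast hsn
      linarith
    have hmain : ((t:ℝ)+1) *
        (∑ j ∈ range (t+2), l^j * ((b.choose j : ℝ) * ((n-b).choose (t+1-j) : ℝ)))
        ≤ ((n:ℝ) - t) * x * F := by
      rw [hrec]
      have hid1 : l * ((b:ℝ)*F - H) + (((n:ℝ)-(b:ℝ)) - t)*F + H
          = (l*(b:ℝ) + (n:ℝ) - (b:ℝ) - t)*F - (l-1)*H := by ring
      have hid2 : ((n:ℝ) - t) * x * F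
          = (l*(b:ℝ) + (n:ℝ) - (b:ℝ) - t)*F - (l-1)*((b:ℝ)*t*F/(n:ℝ)) := by
        rw [hx]; field_simp; ring
      rw [hid1, hid2]
      have hdiv : (b:ℝ)*t*F/(n:ℝ) ≤ H := by
        rw [div_le_iff₀ hnR]
        calc (b:ℝ)*t*F ≤ (n:ℝ)*H := hbtF
          _ = H * (n:ℝ) := by ring
      have : (l-1)*((b:ℝ)*t*F/(n:ℝ)) ≤ (l-1)*H :=
        mul_le_mul_of_nonneg_left hdiv (by linarith)
      linarith
    have hcastnt := htb_cast n t
    have hfinal : ((t:ℝ)+1) *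
        (∑ j ∈ range (t+2), l^j * ((b.choose j : ℝ) * ((n-b).choose (t+1-j) : ℝ)))
        ≤ ((t:ℝ)+1) * ((n.choose (t+1) : ℝ) * x^(t+1)) := by
      calc ((t:ℝ)+1) * (∑ j ∈ range (t+2), l^j * ((b.choose j : ℝ) * ((n-b).choose (t+1-j) : ℝ)))
          ≤ ((n:ℝ) - t) * x * F := hmain
        _ ≤ ((n:ℝ) - t) * x * ((n.choose t : ℝ) * x^t) := by
            apply mul_le_mul_of_nonneg_left IH'
            have : (0:ℝ) ≤ x := by linarith
            nlinarith
        _ = (((n:ℝ) - t) * (n.choose t : ℝ)) * x^(t+1) := by ring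
        _ = (((t:ℝ)+1) * (n.choose (t+1) : ℝ)) * x^(t+1) := by rw [← hcastnt]
        _ = ((t:ℝ)+1) * ((n.choose (t+1) : ℝ) * x^(t+1)) := by ring
    have hpos : (0:ℝ) < (t:ℝ)+1 := by positivity
    exact le_of_mul_le_mul_left hfinal hpos

lemma htb_hasDeriv {y : ℝ} (hy0 : y ≠ 0) (hy1 : y + 1 ≠ 0) :
    HasDerivAt (fun y : ℝ => Real.log y + 4*(y+1)⁻¹) (y⁻¹ + 4 * (-1/(y+1)^2)) y := by
  have h1 : HasDerivAt (fun y : ℝ => y + 1) 1 y := (hasDerivAt_id y).add_const 1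
  have h2 : HasDerivAt (fun y : ℝ => (y+1)⁻¹) (-1/(y+1)^2) y := by
    simpa [Pi.inv_def] using h1.inv hy1
  exact (Real.hasDerivAt_log hy0).add (h2.const_mul 4)

lemma htb_log_lb {x : ℝ} (hx : 1 ≤ x) : 2*(x-1)/(x+1) ≤ Real.log x := by
  set f : ℝ → ℝ := fun y => Real.log y + 4*(y+1)⁻¹ with hf
  have hmono : MonotoneOn f (Set.Ici 1) := by
    apply monotoneOn_of_deriv_nonneg (convex_Ici 1)
    · apply ContinuousOn.add
      · exact Real.continuousOn_log.mono (fun y hy => by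
          simp only [Set.mem_Ici] at hy
          simp only [Set.mem_compl_iff, Set.mem_singleton_iff]
          intro h; rw [h] at hy; linarith)
      · apply ContinuousOn.mul continuousOn_const
        apply ContinuousOn.inv₀ (by fun_prop)
        intro y hy; simp only [Set.mem_Ici] at hy; intro h; linarith
    · intro y hy
      rw [interior_Ici] at hy
      simp only [Set.mem_Ioi] at hy
      exact (htb_hasDeriv (by linarith) (by linarith)).differentiableAt.differentiableWithinAt
    · intro y hy
      rw [interior_Ici] at hy
      simp only [Set.mem_Ioi] at hy
      have hy0 : (0:ℝ) < y := by linarith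
      rw [(htb_hasDeriv (ne_of_gt hy0) (by linarith)).deriv]
      have h1 : 4/(y+1)^2 ≤ y⁻¹ := by
        rw [div_le_iff₀ (by positivity), inv_mul_eq_div, le_div_iff₀ hy0]
        nlinarith
      have h2 : 4 * (-1/(y+1)^2) = -(4/(y+1)^2) := by ring
      rw [h2]
      linarith
  have key := hmono (Set.mem_Ici.mpr le_rfl) (Set.mem_Ici.mpr hx) hx
  simp only [hf, Real.log_one] at key
  -- key : 0 + 4*(1+1)⁻¹ ≤ log x + 4*(x+1)⁻¹
  have hx1 : (0:ℝ) < x + 1 := by linarith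
  have : 2*(x-1)/(x+1) = 2 - 4*(x+1)⁻¹ := by field_simp; ring
  rw [this]
  have : (0:ℝ) + 4*((1:ℝ)+1)⁻¹ = 2 := by norm_num
  rw [this] at key
  linarith

set_option maxHeartbeats 1000000 in
/-- Hypergeometric tail bound for the committees: with `n, q ≥ 1`, `1 ≤ c ≤ q`,
reals `0 < ε < α ≤ 1/3`, `b = ⌊(α − ε)n⌋ ≥ 1`,
`s = ⌈((2α − ε)/ε²)((n ln 2)/c + ln q)⌉ ≤ n`, and
`T = ∑_{j=⌈αs⌉}^{s} C(b,j)·C(n−b, s−j)`, we have `T^c · 2^n · q^c ≤ C(n,s)^c`. -/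
theorem hypergeometric_tail_bound_committees (n q c : ℕ) (ε α : ℝ) (hn : 1 ≤ n)
    (hq : 1 ≤ q) (hc1 : 1 ≤ c) (hcq : c ≤ q) (hε : 0 < ε) (hεα : ε < α)
    (hα : α ≤ 1 / 3) (b s : ℕ) (hb : b = ⌊(α - ε) * (n : ℝ)⌋₊) (hb1 : 1 ≤ b)
    (hs : s = ⌈((2 * α - ε) / ε ^ 2) * (((n : ℝ) * Real.log 2) / (c : ℝ) + Real.log q)⌉₊)
    (hsn : s ≤ n)
    (T : ℕ)
    (hT : T = ∑ j ∈ Finset.Icc ⌈α * (s : ℝ)⌉₊ s, b.choose j * (n - b).choose (s - j)) :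
    (T : ℝ) ^ c * 2 ^ n * (q : ℝ) ^ c ≤ ((n.choose s : ℕ) : ℝ) ^ c := by
  have hnR : (0:ℝ) < n := by exact_mod_cast hn
  have hαε : (0:ℝ) < α - ε := by linarith
  have hα0 : (0:ℝ) < α := by linarith
  have h1α : (0:ℝ) < 1 - α := by linarith
  -- p = b/n
  set p : ℝ := (b:ℝ)/n with hp
  have hbub : (b:ℝ) ≤ (α - ε) * n := by
    rw [hb]
    exact Nat.floor_le (by positivity)
  have hp_pos : 0 < p := by
    apply div_pos _ hnR
    exact_mod_cast hb1
  have hp_ub : p ≤ α - ε := by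
    rw [hp, div_le_iff₀ hnR]
    linarith
  have hpα : p < α := by linarith
  have hp1 : p < 1 := by linarith
  have hbn : b ≤ n := by
    have : (b:ℝ) ≤ (n:ℝ) := by nlinarith
    exact_mod_cast this
  -- l
  set l : ℝ := α*(1-p) / (p*(1-α)) with hl_def
  have hden : 0 < p*(1-α) := by positivity
  have h1p : (0:ℝ) < 1 - p := by linarith
  have hl : 1 ≤ l := by
    rw [hl_def, le_div_iff₀ hden]
    nlinarith
  have hl0 : 0 < l := lt_of_lt_of_le one_pos hl
  -- u = (1-p)/(1-α)
  set u : ℝ := (1-p)/(1-α) with hu_def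
  have hu0 : 0 < u := by positivity
  have hxid : 1 + (l-1) * (b:ℝ) / n = u := by
    rw [hl_def, hu_def]
    have hbe : (b:ℝ) = p * n := by rw [hp]; field_simp
    rw [hbe]
    field_simp
    ring
  -- MGF bound
  have hmgf := htb_mgf n b hn hb1 hbn l hl s hsn
  rw [hxid] at hmgf
  -- tail bound : T * l^m ≤ sum
  set m : ℕ := ⌈α * (s : ℝ)⌉₊ with hm
  have hTcast : (T:ℝ) = ∑ j ∈ Finset.Icc m s, ((b.choose j : ℝ) * ((n-b).choose (s-j) : ℝ)) := by
    rw [hT]; push_cast; rfl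
  have htail : (T:ℝ) * l^m ≤ (n.choose s : ℝ) * u^s := by
    have h1 : (T:ℝ) * l^m = ∑ j ∈ Finset.Icc m s,
        l^m * ((b.choose j : ℝ) * ((n-b).choose (s-j) : ℝ)) := by
      rw [hTcast, Finset.sum_mul]
      exact Finset.sum_congr rfl fun j _ => by ring
    have h2 : ∑ j ∈ Finset.Icc m s, l^m * ((b.choose j : ℝ) * ((n-b).choose (s-j) : ℝ))
        ≤ ∑ j ∈ Finset.Icc m s, l^j * ((b.choose j : ℝ) * ((n-b).choose (s-j) : ℝ)) := by
      apply Finset.sum_le_sum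
      intro j hj
      rw [Finset.mem_Icc] at hj
      apply mul_le_mul_of_nonneg_right (pow_le_pow_right₀ hl hj.1)
      positivity
    have h3 : ∑ j ∈ Finset.Icc m s, l^j * ((b.choose j : ℝ) * ((n-b).choose (s-j) : ℝ))
        ≤ ∑ j ∈ range (s+1), l^j * ((b.choose j : ℝ) * ((n-b).choose (s-j) : ℝ)) := by
      apply Finset.sum_le_sum_of_subset_of_nonneg
      · intro j hj
        rw [Finset.mem_Icc] at hj
        rw [Finset.mem_range]
        omega
      · intro j _ _
        positivity
    rw [h1]
    exact le_trans h2 (le_trans h3 hmgf)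
  -- KL bound
  have hKL : ε^2/(2*α-ε) ≤ α * Real.log l - Real.log u := by
    set e : ℝ := α - p with he
    have he_lb : ε ≤ e := by rw [he]; linarith
    have he_pos : 0 < e := by linarith
    have hlogl : Real.log l = Real.log (α/p) + Real.log u := by
      rw [hl_def, hu_def]
      have : α*(1-p)/(p*(1-α)) = (α/p) * ((1-p)/(1-α)) := by field_simp
      rw [this, Real.log_mul (by positivity) (by positivity)]
    have hA : 2*e/(α+p) ≤ Real.log (α/p) := by
      have hx1 : 1 ≤ α/p := by rw [le_div_iff₀ hp_pos]; linarith
      have := htb_log_lb hx1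
      have heq : 2*(α/p-1)/(α/p+1) = 2*e/(α+p) := by
        rw [he]; field_simp
      rw [heq] at this
      exact this
    have hB : Real.log u ≤ e/(1-α) := by
      have := Real.log_le_sub_one_of_pos hu0
      have heq : u - 1 = e/(1-α) := by rw [hu_def, he]; field_simp; ring
      linarith [heq ▸ this]
    have hstep : e^2/(2*α-e) ≤ α * Real.log l - Real.log u := by
      rw [hlogl]
      have h1 : α * (Real.log (α/p) + Real.log u) - Real.log u
          = α * Real.log (α/p) - (1-α) * Real.log u := by ring
      rw [h1]
      have h2 : α * (2*e/(α+p)) ≤ α * Real.log (α/p) :=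
        mul_le_mul_of_nonneg_left hA (by linarith)
      have h3 : (1-α) * Real.log u ≤ (1-α) * (e/(1-α)) :=
        mul_le_mul_of_nonneg_left hB (by linarith)
      have h4 : (1-α) * (e/(1-α)) = e := by field_simp
      have h5 : α * (2*e/(α+p)) - e = e^2/(2*α-e) := by
        have hαp : α + p = 2*α - e := by rw [he]; ring
        rw [hαp]
        have h2αe : (0:ℝ) < 2*α - e := by rw [he]; linarith
        linear_combination e * mul_inv_cancel₀ h2αe.ne'
      linarith
    have hmono : ε^2/(2*α-ε) ≤ e^2/(2*α-e) := by
      have h2αe : (0:ℝ) < 2*α - e := by rw [he]; linarith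
      have h2αε : (0:ℝ) < 2*α - ε := by linarith
      rw [div_le_div_iff₀ h2αε h2αe]
      have t1 : 0 ≤ (e-ε) * (2*α*(e+ε) - e*ε) := by
        apply mul_nonneg (by linarith)
        have h6 : 0 ≤ e*(2*α-ε) := mul_nonneg he_pos.le h2αε.le
        have h7 : 0 ≤ 2*α*ε := by positivity
        nlinarith
      have expand : (e-ε) * (2*α*(e+ε) - e*ε) = e^2*(2*α-ε) - ε^2*(2*α-e) := by ring
      linarith
    linarith
  -- s is large
  set R : ℝ := ((n : ℝ) * Real.log 2) / (c : ℝ) + Real.log q with hR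
  have hsR : ((2*α-ε)/ε^2) * R ≤ (s:ℝ) := by rw [hs]; exact Nat.le_ceil _
  have h2αε : (0:ℝ) < 2*α - ε := by linarith
  have hε2 : (0:ℝ) < ε^2 := by positivity
  have hRle : R ≤ (s:ℝ) * ε^2 / (2*α-ε) := by
    have key : ((2*α-ε)/ε^2) * R * (ε^2/(2*α-ε)) = R := by
      field_simp
    calc R = ((2*α-ε)/ε^2) * R * (ε^2/(2*α-ε)) := key.symm
      _ ≤ (s:ℝ) * (ε^2/(2*α-ε)) := mul_le_mul_of_nonneg_right hsR (by positivity)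
      _ = (s:ℝ) * ε^2 / (2*α-ε) := by ring
  -- exponent bound
  have hmlb : α * (s:ℝ) ≤ (m:ℝ) := Nat.le_ceil _
  have hlogl0 : 0 ≤ Real.log l := Real.log_nonneg hl
  have hexp : (s:ℝ) * Real.log u - (m:ℝ) * Real.log l ≤ -R := by
    have h1 : α*(s:ℝ)*Real.log l ≤ (m:ℝ)*Real.log l :=
      mul_le_mul_of_nonneg_right hmlb hlogl0
    have h2 : (s:ℝ)*(ε^2/(2*α-ε)) ≤ (s:ℝ)*(α*Real.log l - Real.log u) :=
      mul_le_mul_of_nonneg_left hKL (Nat.cast_nonneg s)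
    have h3 : (s:ℝ) * ε^2 / (2*α-ε) = (s:ℝ)*(ε^2/(2*α-ε)) := by ring
    rw [h3] at hRle
    have e1 : (s:ℝ)*Real.log u - (m:ℝ)*Real.log l ≤ (s:ℝ)*Real.log u - α*(s:ℝ)*Real.log l := by
      linarith [h1]
    have e2 : (s:ℝ)*Real.log u - α*(s:ℝ)*Real.log l = -((s:ℝ)*(α*Real.log l - Real.log u)) := by
      ring
    have e3 : -((s:ℝ)*(α*Real.log l - Real.log u)) ≤ -((s:ℝ)*(ε^2/(2*α-ε))) := by
      linarith [h2]
    have e4 : -((s:ℝ)*(ε^2/(2*α-ε))) ≤ -R := by linarith [hRle]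
    exact le_trans e1 (le_trans (le_of_eq e2) (le_trans e3 e4))
  -- T ≤ C(n,s) * exp(-R)
  have hCnn : (0:ℝ) ≤ (n.choose s : ℝ) := Nat.cast_nonneg _
  have hTle : (T:ℝ) ≤ (n.choose s : ℝ) * Real.exp (-R) := by
    have hus : u^s = Real.exp ((s:ℝ)*Real.log u) := by
      rw [Real.exp_nat_mul, Real.exp_log hu0]
    have hlm : l^m = Real.exp ((m:ℝ)*Real.log l) := by
      rw [Real.exp_nat_mul, Real.exp_log hl0]
    have hlmpos : (0:ℝ) < l^m := pow_pos hl0 m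
    rw [← le_div_iff₀ hlmpos] at htail
    calc (T:ℝ) ≤ (n.choose s : ℝ) * u^s / l^m := htail
      _ = (n.choose s : ℝ) * Real.exp ((s:ℝ)*Real.log u - (m:ℝ)*Real.log l) := by
          rw [hus, hlm, Real.exp_sub]; ring
      _ ≤ (n.choose s : ℝ) * Real.exp (-R) :=
          mul_le_mul_of_nonneg_left (Real.exp_le_exp.mpr hexp) hCnn
  -- raise to power c
  have hpow : (T:ℝ)^c ≤ ((n.choose s : ℝ) * Real.exp (-R))^c :=
    pow_le_pow_left₀ (Nat.cast_nonneg T) hTle c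
  have hcR : (0:ℝ) < (c:ℝ) := by exact_mod_cast hc1
  have hqR : (0:ℝ) < (q:ℝ) := by exact_mod_cast hq
  have hexpc : (Real.exp (-R))^c = ((2:ℝ)^n * (q:ℝ)^c)⁻¹ := by
    rw [← Real.exp_nat_mul]
    have h1 : (c:ℝ) * (-R) = -((n:ℝ)*Real.log 2 + (c:ℝ)*Real.log q) := by
      rw [hR]
      field_simp
    rw [h1, Real.exp_neg, Real.exp_add]
    congr 1
    rw [Real.exp_nat_mul, Real.exp_nat_mul, Real.exp_log two_pos, Real.exp_log hqR]
  have h2q : (0:ℝ) < (2:ℝ)^n * (q:ℝ)^c := by positivity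
  have hfin : (T:ℝ)^c ≤ (n.choose s : ℝ)^c * ((2:ℝ)^n * (q:ℝ)^c)⁻¹ := by
    calc (T:ℝ)^c ≤ ((n.choose s : ℝ) * Real.exp (-R))^c := hpow
      _ = (n.choose s : ℝ)^c * (Real.exp (-R))^c := by rw [mul_pow]
      _ = (n.choose s : ℝ)^c * ((2:ℝ)^n * (q:ℝ)^c)⁻¹ := by rw [hexpc]
  calc (T:ℝ)^c * 2^n * (q:ℝ)^c = (T:ℝ)^c * ((2:ℝ)^n * (q:ℝ)^c) := by ring
    _ ≤ ((n.choose s : ℝ)^c * ((2:ℝ)^n * (q:ℝ)^c)⁻¹) * ((2:ℝ)^n * (q:ℝ)^c) :=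
        mul_le_mul_of_nonneg_right hfin (le_of_lt h2q)
    _ = (n.choose s : ℝ)^c := by field_simp
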